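/- arXiv:1710.07078 — 3 statements merged into one kernel-verified Lean document; each statement's English description precedes it below -/
import Mathlib

section
/- For integers 1 ≤ k ≤ h, the following q-identity holds: ∑_{a=0}^{k-1} (-1)^a q^{binom(a,2)} (q;q)_k (q;q)_{k-a+h-1} / ( (q;q)_{k-a-1} (q;q)_a (q;q)_{k-a} (q;q)_h ) = q^{k(k-1)} [h-1 choose k-1]_q. -/
open Finset

/-- q-Pochhammer symbol: (x;q)_m = ∏_{j=0}^{m-1} (1 - x q^j). -/
noncomputable def qPoch {F : Type*} [Field F] (x q : F) (m : ℕ) : F :=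
  ∏ j ∈ Finset.range m, (1 - x * q ^ j)

/-- (q;q)_m = ∏_{j=1}^{m} (1 - q^j). -/
noncomputable def qFac {F : Type*} [Field F] (q : F) (m : ℕ) : F := qPoch q q m

/-- Gaussian binomial coefficient [n choose a]_q = (q;q)_n / ((q;q)_a (q;q)_{n-a}). -/
noncomputable def qBinom {F : Type*} [Field F] (q : F) (n a : ℕ) : F :=
  if a ≤ n then qFac q n / (qFac q a * qFac q (n - a)) else 0

local notation "FF" => RatFunc ℚ
local notation "Xq" => (RatFunc.X : RatFunc ℚ)

lemma one_sub_pow_ne (j : ℕ) (hj : 1 ≤ j) : (1 : FF) - Xq ^ j ≠ 0 := by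
  intro h
  have hx : (Xq) ^ j = 1 := by linear_combination -h
  rw [← RatFunc.algebraMap_X, ← map_pow, ← map_one (algebraMap (Polynomial ℚ) FF)] at hx
  have := RatFunc.algebraMap_injective ℚ hx
  have hd := congrArg Polynomial.natDegree this
  simp [Polynomial.natDegree_X_pow] at hd
  omega

lemma qFac_ne (m : ℕ) : qFac Xq m ≠ 0 := by
  unfold qFac qPoch
  refine Finset.prod_ne_zero_iff.2 fun j _ => ?_
  have := one_sub_pow_ne (j+1) (by omega)
  rw [pow_succ'] at this
  simpa using this

lemma qFac_succ (m : ℕ) : qFac Xq (m+1) = qFac Xq m * (1 - Xq^(m+1)) := by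
  unfold qFac qPoch
  rw [Finset.prod_range_succ, pow_succ']

lemma qFac_zero : qFac Xq 0 = 1 := by simp [qFac, qPoch]

lemma qBinom_zero (n : ℕ) : qBinom Xq n 0 = 1 := by
  simp [qBinom, qFac_zero, div_self (qFac_ne n)]

lemma qBinom_self (n : ℕ) : qBinom Xq n n = 1 := by
  simp [qBinom, qFac_zero, div_self (qFac_ne n)]

lemma qBinom_of_gt {n a : ℕ} (h : n < a) : qBinom Xq n a = 0 := by
  simp [qBinom, Nat.not_le.2 h]

lemma qBinom_symm (n m : ℕ) (h : m ≤ n) : qBinom Xq n m = qBinom Xq n (n - m) := by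
  unfold qBinom
  rw [if_pos h, if_pos (Nat.sub_le n m), Nat.sub_sub_self h, mul_comm]

lemma pascal₁ (N a : ℕ) :
    qBinom Xq (N+1) (a+1) = qBinom Xq N a + Xq^(a+1) * qBinom Xq N (a+1) := by
  rcases lt_trichotomy a N with h | rfl | h
  · obtain ⟨s, rfl⟩ : ∃ s, N = a + 1 + s := ⟨N - a - 1, by omega⟩
    unfold qBinom
    rw [if_pos (by omega), if_pos (by omega), if_pos (by omega)]
    have e1 : a + 1 + s + 1 - (a + 1) = s + 1 := by omega
    have e2 : a + 1 + s - a = s + 1 := by omega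
    have e3 : a + 1 + s - (a + 1) = s := by omega
    rw [e1, e2, e3, qFac_succ (a+1+s), qFac_succ a, qFac_succ s]
    have h1 := one_sub_pow_ne (a+1) (by omega)
    have h2 := one_sub_pow_ne (s+1) (by omega)
    have h3 := one_sub_pow_ne (a+1+s+1) (by omega)
    field_simp [qFac_ne]
    ring
  · rw [qBinom_self, qBinom_self, qBinom_of_gt (by omega), mul_zero, add_zero]
  · rw [qBinom_of_gt (by omega), qBinom_of_gt (by omega), qBinom_of_gt (by omega)]
    simp

lemma pascal₂ (N a : ℕ) :
    qBinom Xq (N+1) (a+1) = Xq^(N-a) * qBinom Xq N a + qBinom Xq N (a+1) := by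
  rcases lt_trichotomy a N with h | rfl | h
  · obtain ⟨s, rfl⟩ : ∃ s, N = a + 1 + s := ⟨N - a - 1, by omega⟩
    unfold qBinom
    rw [if_pos (by omega), if_pos (by omega), if_pos (by omega)]
    have e1 : a + 1 + s + 1 - (a + 1) = s + 1 := by omega
    have e2 : a + 1 + s - a = s + 1 := by omega
    have e3 : a + 1 + s - (a + 1) = s := by omega
    rw [e1, e2, e3, qFac_succ (a+1+s), qFac_succ a, qFac_succ s]
    have h1 := one_sub_pow_ne (a+1) (by omega)
    have h2 := one_sub_pow_ne (s+1) (by omega)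
    have h3 := one_sub_pow_ne (a+1+s+1) (by omega)
    field_simp [qFac_ne]
    ring
  · rw [qBinom_self, qBinom_self, qBinom_of_gt (by omega), Nat.sub_self]
    simp
  · rw [qBinom_of_gt (by omega), qBinom_of_gt (by omega), qBinom_of_gt (by omega)]
    simp

lemma mainAux : ∀ l n m : ℕ, l ≤ n → m ≤ n →
    ∑ j ∈ Finset.range (l+1),
        (-1:FF)^j * Xq^(j.choose 2) * qBinom Xq l j * qBinom Xq (n-j) m
      = Xq^(l*(n-m)) * qBinom Xq (n-l) (n-m) := by
  intro l
  induction l with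
  | zero =>
    intro n m _ hm
    simp [qBinom_self, qBinom_zero, qBinom_symm n m hm]
  | succ l IH =>
    intro n m hl hm
    rcases eq_or_lt_of_le hm with rfl | hmn
    · -- m = n case
      rw [Finset.sum_eq_single 0]
      · simp [qBinom_zero, qBinom_self, Nat.sub_self]
      · intro j hj hj0
        simp only [Finset.mem_range] at hj
        rw [qBinom_of_gt (show m - j < m by omega), mul_zero]
      · intro h0; simp at h0
    · have IH1 := IH n m (by omega) hm
      have IH2 := IH (n-1) m (by omega) (by omega)
      rw [Finset.sum_range_succ']
      have hsplit : ∀ i ∈ Finset.range (l+1),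
          (-1:FF)^(i+1) * Xq^((i+1).choose 2) * qBinom Xq (l+1) (i+1) * qBinom Xq (n-(i+1)) m
          = (-Xq^l) * ((-1:FF)^i * Xq^(i.choose 2) * qBinom Xq l i * qBinom Xq ((n-1)-i) m)
            + (-1:FF)^(i+1) * Xq^((i+1).choose 2) * qBinom Xq l (i+1) * qBinom Xq (n-(i+1)) m := by
        intro i hi
        simp only [Finset.mem_range] at hi
        rw [pascal₂ l i]
        have ec : (i+1).choose 2 = i.choose 2 + i := by
          rw [Nat.choose_succ_succ' i 1, Nat.choose_one_right]; ring
        have en : n - (i+1) = (n-1) - i := by omega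
        have hx : Xq^(i.choose 2 + i) * Xq^(l-i) = Xq^(i.choose 2) * Xq^l := by
          rw [← pow_add, ← pow_add]; congr 1; omega
        rw [en, ec]
        linear_combination ((-1:FF)^(i+1) * qBinom Xq l i * qBinom Xq ((n-1)-i) m) * hx
      rw [Finset.sum_congr rfl hsplit, Finset.sum_add_distrib, ← Finset.mul_sum]
      have hS : (∑ i ∈ Finset.range (l+1),
            (-1:FF)^(i+1) * Xq^((i+1).choose 2) * qBinom Xq l (i+1) * qBinom Xq (n-(i+1)) m)
          + (-1:FF)^0 * Xq^((0:ℕ).choose 2) * qBinom Xq (l+1) 0 * qBinom Xq (n-0) m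
          = ∑ j ∈ Finset.range (l+1),
              (-1:FF)^j * Xq^(j.choose 2) * qBinom Xq l j * qBinom Xq (n-j) m := by
        rw [show qBinom Xq (l+1) 0 = qBinom Xq l 0 by rw [qBinom_zero, qBinom_zero]]
        have hA := Finset.sum_range_succ' (fun j =>
          (-1:FF)^j * Xq^(j.choose 2) * qBinom Xq l j * qBinom Xq (n-j) m) (l+1)
        have hB := Finset.sum_range_succ (fun j =>
          (-1:FF)^j * Xq^(j.choose 2) * qBinom Xq l j * qBinom Xq (n-j) m) (l+1)
        rw [← hA, hB, qBinom_of_gt (show l < l+1 by omega)]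
        simp
      rw [add_assoc, hS, IH1, IH2]
      -- now pure algebra
      have e1 : n - 1 - l = n - l - 1 := by omega
      have e2 : n - 1 - m = n - m - 1 := by omega
      have e3 : n - l - 1 + 1 = n - l := by omega
      have e4 : n - m - 1 + 1 = n - m := by omega
      have hp := pascal₁ (n - l - 1) (n - m - 1)
      rw [e3, e4] at hp
      rw [e1, e2, hp, show n - (l+1) = n - l - 1 by omega]
      have hx1 : Xq^l * Xq^(l*(n-m-1)) = Xq^(l*(n-m)) := by
        rw [← pow_add]; congr 1
        set t := n - m - 1 with ht
        rw [show n - m = t + 1 by omega]; ring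
      have hx2 : Xq^(l*(n-m)) * Xq^(n-m) = Xq^((l+1)*(n-m)) := by
        rw [← pow_add]; congr 1; ring
      linear_combination (- qBinom Xq (n-l-1) (n-m-1)) * hx1
        + qBinom Xq (n-l-1) (n-m) * hx2

/-- For 1 ≤ k ≤ h:
∑_{a=0}^{k-1} (-1)^a q^{binom(a,2)} (q;q)_k (q;q)_{k-a+h-1}
  / ((q;q)_{k-a-1}(q;q)_a(q;q)_{k-a}(q;q)_h) = q^{k(k-1)} [h-1 choose k-1]_q, in ℚ(q). -/
theorem key_q_identity (k h : ℕ) (hk : 1 ≤ k) (hkh : k ≤ h) :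
    ∑ a ∈ Finset.range k,
        (-1 : RatFunc ℚ) ^ a * (RatFunc.X : RatFunc ℚ) ^ (a.choose 2) *
          qFac (RatFunc.X : RatFunc ℚ) k * qFac (RatFunc.X : RatFunc ℚ) (k - a + h - 1) /
          (qFac (RatFunc.X : RatFunc ℚ) (k - a - 1) * qFac (RatFunc.X : RatFunc ℚ) a *
            qFac (RatFunc.X : RatFunc ℚ) (k - a) * qFac (RatFunc.X : RatFunc ℚ) h) =
      (RatFunc.X : RatFunc ℚ) ^ (k * (k - 1)) * qBinom (RatFunc.X : RatFunc ℚ) (h - 1) (k - 1) := by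
  obtain ⟨h', rfl⟩ : ∃ h', h = h' + 1 := ⟨h - 1, by omega⟩
  have main := mainAux k (h' + k) (h' + 1) (by omega) (by omega)
  rw [Finset.sum_range_succ, show h' + k - k = h' by omega,
    qBinom_of_gt (show h' < h' + 1 by omega), mul_zero, add_zero] at main
  have hterm : ∀ a ∈ Finset.range k,
      (-1 : RatFunc ℚ) ^ a * Xq ^ (a.choose 2) *
          qFac Xq k * qFac Xq (k - a + (h'+1) - 1) /
          (qFac Xq (k - a - 1) * qFac Xq a * qFac Xq (k - a) * qFac Xq (h'+1))
      = (-1:FF)^a * Xq^(a.choose 2) * qBinom Xq k a * qBinom Xq (h'+k-a) (h'+1) := by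
    intro a ha
    simp only [Finset.mem_range] at ha
    unfold qBinom
    rw [if_pos (by omega), if_pos (by omega)]
    rw [show k - a + (h'+1) - 1 = h' + k - a by omega,
      show h' + k - a - (h' + 1) = k - a - 1 by omega]
    field_simp [qFac_ne]
    try ring
    try exact Or.inl trivial
  rw [show h' + k - (h' + 1) = k - 1 by omega] at main
  rw [Finset.sum_congr rfl hterm, main, show h' + 1 - 1 = h' by omega]
end

section
/- (Terminating 2φ1 evaluation) For integers m ≥ 0 and parameters b, c (with c avoiding poles), (b;q)_m / (c;q)_m = ∑_{n=0}^{m} (q^{-m};q)_n (c/b;q)_n / ((q;q)_n (c;q)_n) · (b q^m)^n. -/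
open Finset

/-- The field ℚ(q, b, c) of rational functions in three indeterminates. -/
noncomputable abbrev K3 : Type := FractionRing (MvPolynomial (Fin 3) ℚ)

noncomputable def qV : K3 := algebraMap (MvPolynomial (Fin 3) ℚ) K3 (MvPolynomial.X 0)
noncomputable def bV : K3 := algebraMap (MvPolynomial (Fin 3) ℚ) K3 (MvPolynomial.X 1)
noncomputable def cV : K3 := algebraMap (MvPolynomial (Fin 3) ℚ) K3 (MvPolynomial.X 2)

section Aux

variable {F : Type*} [Field F]

/-- Auxiliary product ∏_{j<n} (q^m - q^j). -/
noncomputable def qpA (q : F) (m n : ℕ) : F := ∏ j ∈ Finset.range n, (q ^ m - q ^ j)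

/-- Auxiliary product ∏_{j<n} (b - c q^j). -/
noncomputable def qpB (b c q : F) (n : ℕ) : F := ∏ j ∈ Finset.range n, (b - c * q ^ j)

lemma qpA_zero (q : F) (m : ℕ) : qpA q m 0 = 1 := by simp [qpA]

lemma qpA_succ (q : F) (m n : ℕ) : qpA q m (n + 1) = qpA q m n * (q ^ m - q ^ n) := by
  simp [qpA, Finset.prod_range_succ]

lemma qpB_zero (b c q : F) : qpB b c q 0 = 1 := by simp [qpB]

lemma qpB_succ (b c q : F) (n : ℕ) :
    qpB b c q (n + 1) = qpB b c q n * (b - c * q ^ n) := by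
  simp [qpB, Finset.prod_range_succ]

lemma qPoch_succ (x q : F) (n : ℕ) :
    qPoch x q (n + 1) = qPoch x q n * (1 - x * q ^ n) := by
  simp [qPoch, Finset.prod_range_succ]

lemma qPoch_shift (x q : F) (n : ℕ) :
    qPoch x q (n + 1) = (1 - x) * qPoch (x * q) q n := by
  unfold qPoch
  rw [Finset.prod_range_succ']
  have h : ∀ j ∈ Finset.range n, (1 - x * q ^ (j + 1)) = (1 - (x * q) * q ^ j) :=
    fun j _ => by ring
  rw [Finset.prod_congr rfl h]
  ring

/-- q-Pascal type recurrence for `qpA`. -/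
lemma qpA_pascal (q : F) (m n : ℕ) :
    qpA q (m + 1) (n + 1) =
      q ^ (n + 1) * qpA q m (n + 1) - q ^ n * (1 - q ^ (n + 1)) * qpA q m n := by
  induction n with
  | zero => simp [qpA]; ring
  | succ n ih =>
    rw [qpA_succ, ih, qpA_succ q m (n + 1), qpA_succ q m n]
    ring

lemma qpA_top (q : F) (m : ℕ) : qpA q m (m + 1) = 0 := by
  unfold qpA
  apply Finset.prod_eq_zero (Finset.self_mem_range_succ m)
  simp

lemma qpB_shift (b c q : F) (n : ℕ) :
    qpB (b * q) (c * q) q n = q ^ n * qpB b c q n := by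
  unfold qpB
  have h : (q : F) ^ n = ∏ _j ∈ Finset.range n, q := by simp
  rw [h, ← Finset.prod_mul_distrib]
  exact Finset.prod_congr rfl fun j _ => by ring

/-- Key lemma: terminating ₂φ₁ evaluation in polynomial-cleared form. -/
lemma key (q : F) (hq : ∀ j : ℕ, 1 - q ^ (j + 1) ≠ 0) :
    ∀ m : ℕ, ∀ b c : F, (∀ j : ℕ, 1 - c * q ^ j ≠ 0) →
      (∑ n ∈ Finset.range (m + 1),
          qpA q m n * qpB b c q n / (qPoch q q n * qPoch c q n))
        = qPoch b q m / qPoch c q m := by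
  intro m
  induction m with
  | zero =>
    intro b c hc
    simp [qpA, qpB, qPoch]
  | succ m ih =>
    intro b c hc
    have hc0 : (1 : F) - c ≠ 0 := by simpa using hc 0
    have hcq : ∀ j : ℕ, 1 - (c * q) * q ^ j ≠ 0 := by
      intro j
      have h := hc (j + 1)
      have e : 1 - c * q ^ (j + 1) = 1 - (c * q) * q ^ j := by ring
      rwa [e] at h
    have hQ : ∀ n : ℕ, qPoch q q n ≠ 0 := by
      intro n
      unfold qPoch
      rw [Finset.prod_ne_zero_iff]
      intro j _
      have h := hq j
      have e : 1 - q ^ (j + 1) = 1 - q * q ^ j := by ring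
      rwa [e] at h
    have hC : ∀ n : ℕ, qPoch c q n ≠ 0 := by
      intro n
      unfold qPoch
      rw [Finset.prod_ne_zero_iff]
      exact fun j _ => hc j
    have hCq : ∀ n : ℕ, qPoch (c * q) q n ≠ 0 := by
      intro n
      unfold qPoch
      rw [Finset.prod_ne_zero_iff]
      exact fun j _ => hcq j
    have hCqval : ∀ n : ℕ,
        qPoch (c * q) q n = qPoch c q n * (1 - c * q ^ n) / (1 - c) := by
      intro n
      rw [eq_div_iff hc0, mul_comm (qPoch (c * q) q n) (1 - c), ← qPoch_shift,
        qPoch_succ]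
    -- Step 1: Pascal recurrence and telescoping reorganization
    have step1 :
        (∑ n ∈ Finset.range (m + 1 + 1),
            qpA q (m + 1) n * qpB b c q n / (qPoch q q n * qPoch c q n))
          = ∑ n ∈ Finset.range (m + 1),
              (q ^ n * qpA q m n * qpB b c q n / (qPoch q q n * qPoch c q n)
                - q ^ n * (1 - q ^ (n + 1)) * qpA q m n * qpB b c q (n + 1) /
                    (qPoch q q (n + 1) * qPoch c q (n + 1))) := by
      rw [Finset.sum_range_succ']
      have hterm : ∀ k ∈ Finset.range (m + 1),
          qpA q (m + 1) (k + 1) * qpB b c q (k + 1) /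
              (qPoch q q (k + 1) * qPoch c q (k + 1))
            = (q ^ (k + 1) * qpA q m (k + 1) * qpB b c q (k + 1) /
                (qPoch q q (k + 1) * qPoch c q (k + 1)))
              - q ^ k * (1 - q ^ (k + 1)) * qpA q m k * qpB b c q (k + 1) /
                  (qPoch q q (k + 1) * qPoch c q (k + 1)) := by
        intro k _
        rw [qpA_pascal, sub_mul, sub_div]
      rw [Finset.sum_congr rfl hterm, Finset.sum_sub_distrib]
      have h0 : qpA q (m + 1) 0 * qpB b c q 0 / (qPoch q q 0 * qPoch c q 0)
          = q ^ 0 * qpA q m 0 * qpB b c q 0 / (qPoch q q 0 * qPoch c q 0) := by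
        simp [qpA_zero]
      rw [h0]
      have h1 : (∑ k ∈ Finset.range (m + 1),
            q ^ (k + 1) * qpA q m (k + 1) * qpB b c q (k + 1) /
              (qPoch q q (k + 1) * qPoch c q (k + 1)))
            + q ^ 0 * qpA q m 0 * qpB b c q 0 / (qPoch q q 0 * qPoch c q 0)
          = ∑ n ∈ Finset.range (m + 1 + 1),
              q ^ n * qpA q m n * qpB b c q n / (qPoch q q n * qPoch c q n) :=
        (Finset.sum_range_succ'
          (fun n => q ^ n * qpA q m n * qpB b c q n / (qPoch q q n * qPoch c q n))
          (m + 1)).symm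
      have h2 : (∑ n ∈ Finset.range (m + 1 + 1),
            q ^ n * qpA q m n * qpB b c q n / (qPoch q q n * qPoch c q n))
          = ∑ n ∈ Finset.range (m + 1),
              q ^ n * qpA q m n * qpB b c q n / (qPoch q q n * qPoch c q n) := by
        rw [Finset.sum_range_succ, qpA_top]
        simp
      rw [sub_add_eq_add_sub, h1, h2, Finset.sum_sub_distrib]
    rw [step1]
    -- Step 2: per-term simplification to the shifted sum
    have step2 : ∀ n ∈ Finset.range (m + 1),
        (q ^ n * qpA q m n * qpB b c q n / (qPoch q q n * qPoch c q n)
          - q ^ n * (1 - q ^ (n + 1)) * qpA q m n * qpB b c q (n + 1) /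
              (qPoch q q (n + 1) * qPoch c q (n + 1)))
          = (1 - b) / (1 - c) *
              (qpA q m n * qpB (b * q) (c * q) q n /
                (qPoch q q n * qPoch (c * q) q n)) := by
      intro n _
      have hqn1 : (1 : F) - q ^ (n + 1) ≠ 0 := hq n
      have hcqn : (1 : F) - c * q ^ n ≠ 0 := hc n
      have hqqn : (1 : F) - q * q ^ n ≠ 0 := by
        have e : 1 - q ^ (n + 1) = 1 - q * q ^ n := by ring
        rwa [e] at hqn1
      have hrel : (1 - c) * qPoch (c * q) q n = qPoch c q n * (1 - c * q ^ n) := by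
        rw [← qPoch_shift, qPoch_succ]
      have hQn := hQ n
      have hCn := hC n
      have hCqn := hCq n
      rw [qpB_succ, qpB_shift, qPoch_succ q q n, qPoch_succ c q n]
      have hsub : q ^ n * (1 - q ^ (n + 1)) * qpA q m n *
            (qpB b c q n * (b - c * q ^ n)) /
            (qPoch q q n * (1 - q * q ^ n) * (qPoch c q n * (1 - c * q ^ n)))
          = q ^ n * qpA q m n * qpB b c q n * (b - c * q ^ n) /
              (qPoch q q n * (qPoch c q n * (1 - c * q ^ n))) := by
        rw [div_eq_div_iff
          (mul_ne_zero (mul_ne_zero hQn hqqn) (mul_ne_zero hCn hcqn))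
          (mul_ne_zero hQn (mul_ne_zero hCn hcqn))]
        ring
      rw [hsub, div_sub_div _ _ (mul_ne_zero hQn hCn)
          (mul_ne_zero hQn (mul_ne_zero hCn hcqn)),
        div_mul_div_comm,
        div_eq_div_iff
          (mul_ne_zero (mul_ne_zero hQn hCn)
            (mul_ne_zero hQn (mul_ne_zero hCn hcqn)))
          (mul_ne_zero hc0 (mul_ne_zero hQn hCqn))]
      linear_combination ((1 - b) * q ^ n * qpA q m n * qpB b c q n *
        qPoch q q n ^ 2 * qPoch c q n) * hrel
    rw [Finset.sum_congr rfl step2, ← Finset.mul_sum, ih (b * q) (c * q) hcq,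
      qPoch_shift b q m, qPoch_shift c q m, div_mul_div_comm]

end Aux

section K3facts

lemma algMap_injective :
    Function.Injective (algebraMap (MvPolynomial (Fin 3) ℚ) K3) :=
  IsFractionRing.injective _ _

lemma one_sub_ne_zero (p : MvPolynomial (Fin 3) ℚ)
    (h : MvPolynomial.eval (fun _ => (0 : ℚ)) p ≠ 1) :
    (1 : K3) - algebraMap (MvPolynomial (Fin 3) ℚ) K3 p ≠ 0 := by
  intro h0
  have h1 : algebraMap (MvPolynomial (Fin 3) ℚ) K3 (1 - p) = 0 := by
    rw [map_sub, map_one]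
    exact h0
  have h2 : (1 - p : MvPolynomial (Fin 3) ℚ) = 0 := by
    apply algMap_injective
    rw [h1, map_zero]
  have h3 := congrArg (MvPolynomial.eval (fun _ => (0 : ℚ))) h2
  simp only [map_sub, map_one, map_zero] at h3
  exact h (by linarith [h3])

lemma qV_ne_zero : qV ≠ 0 := by
  intro h
  have : (MvPolynomial.X 0 : MvPolynomial (Fin 3) ℚ) = 0 := by
    apply algMap_injective
    rw [← qV, h, map_zero]
  exact MvPolynomial.X_ne_zero 0 this

lemma bV_ne_zero : bV ≠ 0 := by
  intro h
  have : (MvPolynomial.X 1 : MvPolynomial (Fin 3) ℚ) = 0 := by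
    apply algMap_injective
    rw [← bV, h, map_zero]
  exact MvPolynomial.X_ne_zero 1 this

lemma hq_fact : ∀ j : ℕ, (1 : K3) - qV ^ (j + 1) ≠ 0 := by
  intro j
  have e : qV ^ (j + 1)
      = algebraMap (MvPolynomial (Fin 3) ℚ) K3 (MvPolynomial.X 0 ^ (j + 1)) := by
    rw [map_pow, qV]
  rw [e]
  apply one_sub_ne_zero
  simp

lemma hc_fact : ∀ j : ℕ, (1 : K3) - cV * qV ^ j ≠ 0 := by
  intro j
  have e : cV * qV ^ j
      = algebraMap (MvPolynomial (Fin 3) ℚ) K3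
          (MvPolynomial.X 2 * MvPolynomial.X 0 ^ j) := by
    rw [map_mul, map_pow, qV, cV]
  rw [e]
  apply one_sub_ne_zero
  simp

end K3facts

section TermRewrite

variable {F : Type*} [Field F]

lemma prodA_eq (q : F) (hq : q ≠ 0) (m n : ℕ) :
    qPoch ((q ^ m)⁻¹) q n * (q ^ m) ^ n = qpA q m n := by
  unfold qPoch qpA
  have h : ((q : F) ^ m) ^ n = ∏ _j ∈ Finset.range n, q ^ m := by simp
  rw [h, ← Finset.prod_mul_distrib]
  refine Finset.prod_congr rfl fun j _ => ?_
  have hqm : (q : F) ^ m ≠ 0 := pow_ne_zero _ hq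
  field_simp

lemma prodB_eq (b c q : F) (hb : b ≠ 0) (n : ℕ) :
    qPoch (c / b) q n * b ^ n = qpB b c q n := by
  unfold qPoch qpB
  have h : (b : F) ^ n = ∏ _j ∈ Finset.range n, b := by simp
  rw [h, ← Finset.prod_mul_distrib]
  refine Finset.prod_congr rfl fun j _ => ?_
  field_simp

end TermRewrite

/-- (Terminating 2φ1 evaluation / q-Chu–Vandermonde) For m ≥ 0,
(b;q)_m / (c;q)_m = ∑_{n=0}^{m} (q^{-m};q)_n (c/b;q)_n / ((q;q)_n (c;q)_n) · (b q^m)^n,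
as an identity in ℚ(q, b, c). -/
theorem terminating_2phi1 (m : ℕ) :
    qPoch bV qV m / qPoch cV qV m =
      ∑ n ∈ Finset.range (m + 1),
        qPoch (qV ^ (-(m : ℤ))) qV n * qPoch (cV / bV) qV n /
          (qPoch qV qV n * qPoch cV qV n) * (bV * qV ^ m) ^ n := by
  rw [← key qV hq_fact m bV cV hc_fact]
  refine Finset.sum_congr rfl fun n _ => ?_
  have hz : qV ^ (-(m : ℤ)) = (qV ^ m)⁻¹ := by
    rw [zpow_neg, zpow_natCast]
  rw [hz]
  calc qpA qV m n * qpB bV cV qV n / (qPoch qV qV n * qPoch cV qV n)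
      = (qPoch ((qV ^ m)⁻¹) qV n * (qV ^ m) ^ n) *
          (qPoch (cV / bV) qV n * bV ^ n) / (qPoch qV qV n * qPoch cV qV n) := by
        rw [prodA_eq qV qV_ne_zero, prodB_eq bV cV qV bV_ne_zero]
    _ = qPoch ((qV ^ m)⁻¹) qV n * qPoch (cV / bV) qV n /
          (qPoch qV qV n * qPoch cV qV n) * (bV * qV ^ m) ^ n := by
        rw [mul_pow]
        ring
end

section
/- For a partition μ of n with multiplicities m_i = m_i(μ), the specialization w_μ(0,t) of the Macdonald weight equals (-1)^{n-ℓ(μ)} t^{2n(μ)+n-∑_i binom(m_i+1, 2)} ∏_i (t;t)_{m_i}. -/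
open Finset

/-- The parts of a partition as a weakly decreasing list. -/
def partsList {n : ℕ} (μ : n.Partition) : List ℕ := (μ.parts.sort (· ≤ ·)).reverse

/-- Length of row i (0-indexed) of the Young diagram of μ. -/
def pRowLen {n : ℕ} (μ : n.Partition) (i : ℕ) : ℕ := (partsList μ).getD i 0

/-- Length of column j (0-indexed) of the Young diagram of μ. -/
def pColLen {n : ℕ} (μ : n.Partition) (j : ℕ) : ℕ :=
  Multiset.card (μ.parts.filter (fun p => j < p))

/-- The cells (i,j) of the Young diagram of μ (i = row index, j = column index). -/
def pCells {n : ℕ} (μ : n.Partition) : Finset (ℕ × ℕ) :=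
  (Finset.range n ×ˢ Finset.range n).filter (fun c => c.2 < pRowLen μ c.1)

/-- The arm a(c) of a cell. -/
def pArm {n : ℕ} (μ : n.Partition) (c : ℕ × ℕ) : ℕ := pRowLen μ c.1 - c.2 - 1

/-- The leg l(c) of a cell. -/
def pLeg {n : ℕ} (μ : n.Partition) (c : ℕ × ℕ) : ℕ := pColLen μ c.2 - c.1 - 1

/-- n(μ) = ∑_{c∈μ} l(c). -/
def nStat {n : ℕ} (μ : n.Partition) : ℕ := ∑ c ∈ pCells μ, pLeg μ c

/-- Length ℓ(μ). -/
def pLen {n : ℕ} (μ : n.Partition) : ℕ := Multiset.card μ.parts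

/-- Multiplicity m_i(μ) of i as a part of μ. -/
def pMult {n : ℕ} (μ : n.Partition) (i : ℕ) : ℕ := μ.parts.count i

/-- The Macdonald weight w_μ(q,t) = ∏_{c∈μ} (q^{a(c)} - t^{l(c)+1})(t^{l(c)} - q^{a(c)+1}). -/
noncomputable def wMu {n : ℕ} (μ : n.Partition) (q t : RatFunc ℚ) : RatFunc ℚ :=
  ∏ c ∈ pCells μ, ((q ^ pArm μ c - t ^ (pLeg μ c + 1)) * (t ^ pLeg μ c - q ^ (pArm μ c + 1)))


section Aux
variable {n : ℕ} (μ : n.Partition)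

lemma partsList_coe : (↑(partsList μ) : Multiset ℕ) = μ.parts := by
  simp [partsList]

lemma partsList_sorted : (partsList μ).Pairwise (· ≥ ·) := by
  rw [partsList, List.pairwise_reverse]
  exact List.Pairwise.imp (fun h => h) (μ.parts.pairwise_sort (· ≤ ·))

lemma partsList_length : (partsList μ).length = pLen μ := by
  rw [pLen, ← partsList_coe, Multiset.coe_card]

lemma parts_le {p : ℕ} (hp : p ∈ μ.parts) : p ≤ n := by
  conv_rhs => rw [← μ.parts_sum]
  exact Multiset.le_sum_of_mem hp

lemma rowLen_le (i : ℕ) : pRowLen μ i ≤ n := by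
  rw [pRowLen]
  by_cases hi : i < (partsList μ).length
  · refine parts_le μ ?_
    rw [← partsList_coe, Multiset.mem_coe, List.getD_eq_getElem _ _ hi]
    exact List.getElem_mem _
  · rw [List.getD_eq_default _ _ (by omega)]; omega

lemma pLen_le : pLen μ ≤ n := by
  have h : Multiset.card μ.parts • 1 ≤ μ.parts.sum :=
    Multiset.card_nsmul_le_sum (fun x hx => μ.parts_pos hx)
  rw [smul_eq_mul, mul_one] at h
  rw [μ.parts_sum] at h
  exact h

lemma lt_pLen_iff (i : ℕ) : i < pLen μ ↔ 1 ≤ pRowLen μ i := by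
  rw [← partsList_length, pRowLen]
  constructor
  · intro hi
    have hm : (partsList μ).getD i 0 ∈ partsList μ := by
      rw [List.getD_eq_getElem _ _ hi]; exact List.getElem_mem _
    rw [← Multiset.mem_coe, partsList_coe] at hm
    exact μ.parts_pos hm
  · intro h
    by_contra hi
    rw [List.getD_eq_default _ _ (by omega)] at h; omega

lemma filter_length_iff (L : List ℕ) (hL : L.Pairwise (· ≥ ·)) (k : ℕ) (hk : 1 ≤ k) :
    ∀ i, i < (L.filter (fun p => k ≤ p)).length ↔ k ≤ L.getD i 0 := by
  induction L with
  | nil => intro i; simp; omega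
  | cons a tl ih =>
    rw [List.pairwise_cons] at hL
    intro i
    by_cases ha : k ≤ a
    · rw [List.filter_cons_of_pos (by simpa using ha)]
      cases i with
      | zero => simpa using ha
      | succ i => simpa using ih hL.2 i
    · rw [List.filter_cons_of_neg (by simpa using ha)]
      have h0 : tl.filter (fun p => k ≤ p) = [] := by
        rw [List.filter_eq_nil_iff]
        intro b hb
        have := hL.1 b hb
        simp only [decide_eq_true_eq]
        omega
      rw [h0]
      simp only [List.length_nil, Nat.not_lt_zero, false_iff]
      cases i with
      | zero => simpa using ha
      | succ i =>
        simp only [List.getD_cons_succ]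
        by_cases hi : i < tl.length
        · have hm : tl.getD i 0 ∈ tl := by
            rw [List.getD_eq_getElem _ _ hi]
            exact List.getElem_mem _
          have := hL.1 _ hm
          omega
        · rw [List.getD_eq_default _ _ (by omega)]; omega

lemma lt_pColLen_iff (j i : ℕ) : i < pColLen μ j ↔ j < pRowLen μ i := by
  have h := filter_length_iff (partsList μ) (partsList_sorted μ) (j+1) (by omega) i
  rw [pColLen, ← partsList_coe μ]
  rw [Multiset.filter_coe, Multiset.coe_card]
  rw [pRowLen]
  simpa only [Nat.lt_iff_add_one_le] using h

lemma sum_range_getD (L : List ℕ) : ∀ (m : ℕ), L.length ≤ m →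
    ∑ i ∈ range m, L.getD i 0 = L.sum := by
  induction L with
  | nil => intro m _; simp
  | cons a tl ih =>
    intro m hm
    obtain ⟨m', rfl⟩ : ∃ m', m = m' + 1 := ⟨m - 1, by simp at hm; omega⟩
    rw [Finset.sum_range_succ']
    simp only [List.getD_cons_succ, List.getD_cons_zero, List.sum_cons]
    rw [ih m' (by simp at hm; omega)]
    omega

lemma card_pCells : (pCells μ).card = n := by
  rw [Finset.card_eq_sum_card_fiberwise (f := Prod.fst) (t := range n)
    (fun c hc => by
      simp only [Finset.mem_coe, pCells, Finset.mem_filter, Finset.mem_product] at hc ⊢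
      exact hc.1.1)]
  have h : ∀ i ∈ range n, ((pCells μ).filter (fun c => c.1 = i)).card = pRowLen μ i := by
    intro i hi
    rw [mem_range] at hi
    have : (pCells μ).filter (fun c => c.1 = i) = (range (pRowLen μ i)).image (Prod.mk i) := by
      ext c
      simp only [pCells, Finset.mem_filter, Finset.mem_product, Finset.mem_image, mem_range]
      constructor
      · rintro ⟨⟨_, _⟩, rfl⟩
        exact ⟨c.2, ⟨by omega, rfl⟩⟩
      · rintro ⟨j, hj, rfl⟩
        have h2 := rowLen_le μ i
        have h3 : (i, j).1 = i := rfl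
        have h4 : (i, j).2 = j := rfl
        refine ⟨⟨?_, ?_⟩, ?_⟩ <;> rw [h3] <;> try rw [h4]
        all_goals omega
    rw [this, Finset.card_image_of_injective _ (fun a b h => by simpa using h), Finset.card_range]
  rw [Finset.sum_congr rfl h]
  have hs := sum_range_getD (partsList μ) n (by rw [partsList_length]; exact pLen_le μ)
  show ∑ i ∈ range n, (partsList μ).getD i 0 = n
  rw [hs]
  have hc : (↑(partsList μ) : Multiset ℕ).sum = μ.parts.sum := by rw [partsList_coe]
  simpa using hc.trans μ.parts_sum

lemma pColLen_step (k : ℕ) : pColLen μ k = pColLen μ (k + 1) + pMult μ (k + 1) := by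
  have h := Multiset.filter_add_filter (fun p => k + 1 < p) (fun p => p = k + 1) μ.parts
  have h1 : Multiset.filter (fun p => k + 1 < p ∨ p = k + 1) μ.parts
      = Multiset.filter (fun p => k < p) μ.parts := Multiset.filter_congr (fun x _ => by omega)
  have h2 : Multiset.filter (fun p => (k + 1 < p) ∧ p = k + 1) μ.parts = 0 := by
    rw [Multiset.filter_eq_nil]
    intro a _ ha
    omega
  rw [h1, h2] at h
  have hcard := congrArg Multiset.card h
  simp only [Multiset.card_add, Multiset.card_zero, add_zero] at hcard
  rw [pColLen, pColLen, ← hcard, pMult]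
  congr 1
  rw [Multiset.count_eq_card_filter_eq]
  congr 1
  ext p
  simp [eq_comm]

lemma mem_block_iff {k : ℕ} (hk : 1 ≤ k) (i : ℕ) :
    i ∈ Ico (pColLen μ k) (pColLen μ (k - 1)) ↔ pRowLen μ i = k := by
  rw [Finset.mem_Ico, ← Nat.not_lt, lt_pColLen_iff, lt_pColLen_iff]
  omega

lemma block_union :
    range (pLen μ) = (Icc 1 n).biUnion (fun k => Ico (pColLen μ k) (pColLen μ (k - 1))) := by
  ext i
  simp only [Finset.mem_biUnion, Finset.mem_Icc, mem_range]
  constructor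
  · intro hi
    refine ⟨pRowLen μ i, ⟨(lt_pLen_iff μ i).1 hi, rowLen_le μ i⟩, ?_⟩
    rw [mem_block_iff μ ((lt_pLen_iff μ i).1 hi)]
  · rintro ⟨k, ⟨hk1, _⟩, hi⟩
    rw [mem_block_iff μ hk1] at hi
    rw [lt_pLen_iff]
    omega

lemma block_disjoint :
    (↑(Icc 1 n) : Set ℕ).PairwiseDisjoint (fun k => Ico (pColLen μ k) (pColLen μ (k - 1))) := by
  intro k hk l hl hkl
  simp only [Finset.coe_Icc, Set.mem_Icc] at hk hl
  apply Finset.disjoint_left.2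
  intro i hik hil
  rw [mem_block_iff μ hk.1] at hik
  rw [mem_block_iff μ hl.1] at hil
  omega

lemma pColLen_pred {k : ℕ} (hk : 1 ≤ k) :
    pColLen μ (k - 1) = pColLen μ k + pMult μ k := by
  have h := pColLen_step μ (k - 1)
  have h1 : k - 1 + 1 = k := by omega
  rwa [h1] at h

lemma block_reindex {M : Type*} [CommMonoid M] (F : ℕ → M) {k : ℕ} (hk : 1 ≤ k) :
    ∏ i ∈ Ico (pColLen μ k) (pColLen μ (k - 1)), F (pColLen μ (k - 1) - i)
      = ∏ j ∈ Icc 1 (pMult μ k), F j := by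
  have hA := pColLen_pred μ hk
  refine Finset.prod_nbij' (fun i => pColLen μ (k - 1) - i) (fun j => pColLen μ (k - 1) - j)
    ?_ ?_ ?_ ?_ ?_
  · intro a ha; simp only [Finset.mem_Ico] at ha; simp only [Finset.mem_Icc]; omega
  · intro b hb; simp only [Finset.mem_Icc] at hb; simp only [Finset.mem_Ico]; omega
  · intro a ha; simp only [Finset.mem_Ico] at ha; omega
  · intro b hb; simp only [Finset.mem_Icc] at hb; omega
  · intro a _; rfl

lemma block_prod {M : Type*} [CommMonoid M] (F : ℕ → M) :
    ∏ i ∈ range (pLen μ), F (pColLen μ (pRowLen μ i - 1) - i)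
      = ∏ k ∈ Icc 1 n, ∏ j ∈ Icc 1 (pMult μ k), F j := by
  rw [block_union μ, Finset.prod_biUnion (block_disjoint μ)]
  refine Finset.prod_congr rfl ?_
  intro k hk
  rw [Finset.mem_Icc] at hk
  rw [← block_reindex μ F hk.1]
  refine Finset.prod_congr rfl ?_
  intro i hi
  rw [(mem_block_iff μ hk.1 i).1 hi]

lemma block_reindex_sum (F : ℕ → ℕ) {k : ℕ} (hk : 1 ≤ k) :
    ∑ i ∈ Ico (pColLen μ k) (pColLen μ (k - 1)), F (pColLen μ (k - 1) - i)
      = ∑ j ∈ Icc 1 (pMult μ k), F j := by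
  have hA := pColLen_pred μ hk
  refine Finset.sum_nbij' (fun i => pColLen μ (k - 1) - i) (fun j => pColLen μ (k - 1) - j)
    ?_ ?_ ?_ ?_ ?_
  · intro a ha; simp only [Finset.mem_Ico] at ha; simp only [Finset.mem_Icc]; omega
  · intro b hb; simp only [Finset.mem_Icc] at hb; simp only [Finset.mem_Ico]; omega
  · intro a ha; simp only [Finset.mem_Ico] at ha; omega
  · intro b hb; simp only [Finset.mem_Icc] at hb; omega
  · intro a _; rfl

lemma block_sum (F : ℕ → ℕ) :
    ∑ i ∈ range (pLen μ), F (pColLen μ (pRowLen μ i - 1) - i)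
      = ∑ k ∈ Icc 1 n, ∑ j ∈ Icc 1 (pMult μ k), F j := by
  rw [block_union μ, Finset.sum_biUnion (block_disjoint μ)]
  refine Finset.sum_congr rfl ?_
  intro k hk
  rw [Finset.mem_Icc] at hk
  rw [← block_reindex_sum μ F hk.1]
  refine Finset.sum_congr rfl ?_
  intro i hi
  rw [(mem_block_iff μ hk.1 i).1 hi]

lemma corners_eq : (pCells μ).filter (fun c => pArm μ c = 0)
    = (range (pLen μ)).image (fun i => (i, pRowLen μ i - 1)) := by
  ext c
  obtain ⟨i, j⟩ := c
  rw [Finset.mem_filter, Finset.mem_image, pCells, Finset.mem_filter, Finset.mem_product]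
  simp only [pArm, mem_range]
  constructor
  · rintro ⟨⟨⟨h1, h2⟩, h3⟩, h4⟩
    refine ⟨i, ?_, ?_⟩
    · rw [lt_pLen_iff]; omega
    · have : pRowLen μ i - 1 = j := by omega
      rw [this]
  · rintro ⟨i', hi', heq⟩
    obtain ⟨rfl, rfl⟩ : i' = i ∧ pRowLen μ i' - 1 = j := by
      constructor <;> [exact congrArg Prod.fst heq; exact congrArg Prod.snd heq]
    have hi2 := (lt_pLen_iff μ i').1 hi'
    have h2 := rowLen_le μ i'
    have h3 := pLen_le μ
    refine ⟨⟨⟨?_, ?_⟩, ?_⟩, ?_⟩ <;> omega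

lemma corner_lt (i : ℕ) (hi : i < pLen μ) : i < pColLen μ (pRowLen μ i - 1) := by
  rw [lt_pColLen_iff]
  have := (lt_pLen_iff μ i).1 hi
  omega

lemma corner_leg (i : ℕ) (hi : i < pLen μ) :
    pLeg μ (i, pRowLen μ i - 1) + 1 = pColLen μ (pRowLen μ i - 1) - i := by
  have h := corner_lt μ i hi
  simp only [pLeg]
  omega

lemma sum_Icc_id (m : ℕ) : ∑ j ∈ Icc 1 m, j = (m + 1).choose 2 := by
  induction m with
  | zero => simp
  | succ m ih =>
    rw [Finset.sum_Icc_succ_top (by omega), ih]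
    have h : (m + 1 + 1).choose 2 = (m + 1).choose 1 + (m + 1).choose 2 :=
      Nat.choose_succ_succ (m + 1) 1
    rw [Nat.choose_one_right] at h
    omega

lemma qPoch_eq {F : Type*} [Field F] (x : F) (m : ℕ) :
    qPoch x x m = ∏ j ∈ Icc 1 m, (1 - x ^ j) := by
  induction m with
  | zero => simp [qPoch]
  | succ m ih =>
    rw [qPoch, Finset.prod_range_succ, ← qPoch, ih, Finset.prod_Icc_succ_top (by omega)]
    rw [pow_succ']

end Aux

/-- For μ ⊢ n with multiplicities m_i,
w_μ(0,t) = (-1)^{n-ℓ(μ)} t^{2n(μ)+n-∑_i binom(m_i+1,2)} ∏_i (t;t)_{m_i}, in ℚ(t). -/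
theorem wMu_at_q_zero (n : ℕ) (μ : n.Partition) :
    wMu μ 0 (RatFunc.X : RatFunc ℚ) =
      (-1 : RatFunc ℚ) ^ (n - pLen μ) *
        (RatFunc.X : RatFunc ℚ) ^
          ((2 * nStat μ + n : ℤ) - ∑ i ∈ Finset.Icc 1 n, ((pMult μ i + 1).choose 2 : ℤ)) *
        ∏ i ∈ Finset.Icc 1 n, qPoch (RatFunc.X : RatFunc ℚ) (RatFunc.X : RatFunc ℚ) (pMult μ i) := by
  set t : RatFunc ℚ := RatFunc.X with ht
  have key : ∀ c ∈ pCells μ,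
      ((0:RatFunc ℚ) ^ pArm μ c - t ^ (pLeg μ c + 1)) * (t ^ pLeg μ c - 0 ^ (pArm μ c + 1))
      = ((if pArm μ c = 0 then (1:RatFunc ℚ) else -1) *
          t ^ (if pArm μ c = 0 then pLeg μ c else 2 * pLeg μ c + 1)) *
        (if pArm μ c = 0 then 1 - t ^ (pLeg μ c + 1) else 1) := by
    intro c _
    have h1 : (0:RatFunc ℚ) ^ (pArm μ c + 1) = 0 := zero_pow (by omega)
    by_cases h : pArm μ c = 0
    · rw [h1, if_pos h, if_pos h, if_pos h, h, pow_zero]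
      ring
    · have h0 : (0:RatFunc ℚ) ^ pArm μ c = 0 := zero_pow h
      rw [h0, h1, if_neg h, if_neg h, if_neg h]
      have h2 : 2 * pLeg μ c + 1 = (pLeg μ c + 1) + pLeg μ c := by omega
      rw [h2, pow_add]
      ring
  rw [wMu, Finset.prod_congr rfl key, Finset.prod_mul_distrib, Finset.prod_mul_distrib,
    Finset.prod_pow_eq_pow_sum]
  have hinj : Function.Injective (fun i : ℕ => (i, pRowLen μ i - 1)) := by
    intro a b hab
    exact congrArg Prod.fst hab
  have hcorners := corners_eq μ
  have hcardC : ((pCells μ).filter (fun c => pArm μ c = 0)).card = pLen μ := by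
    rw [hcorners, Finset.card_image_of_injective _ hinj, Finset.card_range]
  have hsgn : (∏ c ∈ pCells μ, (if pArm μ c = 0 then (1:RatFunc ℚ) else -1))
      = (-1) ^ (n - pLen μ) := by
    rw [Finset.prod_ite, Finset.prod_const, Finset.prod_const, one_pow, one_mul]
    congr 1
    have h := Finset.card_filter_add_card_filter_not (s := pCells μ)
      (p := fun c => pArm μ c = 0)
    rw [card_pCells μ, hcardC] at h
    omega
  have hprod : (∏ c ∈ pCells μ, (if pArm μ c = 0 then 1 - t ^ (pLeg μ c + 1) else 1))
      = ∏ i ∈ Finset.Icc 1 n, qPoch t t (pMult μ i) := by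
    rw [← Finset.prod_filter, hcorners, Finset.prod_image (fun a _ b _ h => hinj h)]
    have hstep : ∏ i ∈ range (pLen μ), (1 - t ^ (pLeg μ (i, pRowLen μ i - 1) + 1))
        = ∏ i ∈ range (pLen μ), (1 - t ^ (pColLen μ (pRowLen μ i - 1) - i)) :=
      Finset.prod_congr rfl (fun i hi => by rw [corner_leg μ i (mem_range.1 hi)])
    rw [hstep, block_prod μ (fun j => 1 - t ^ j)]
    exact Finset.prod_congr rfl (fun k _ => (qPoch_eq t (pMult μ k)).symm)
  set E := ∑ c ∈ pCells μ, (if pArm μ c = 0 then pLeg μ c else 2 * pLeg μ c + 1) with hE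
  have hT : E + ∑ i ∈ Finset.Icc 1 n, (pMult μ i + 1).choose 2 = 2 * nStat μ + n := by
    have hTval : (∑ c ∈ (pCells μ).filter (fun c => pArm μ c = 0), (pLeg μ c + 1))
        = ∑ i ∈ Finset.Icc 1 n, (pMult μ i + 1).choose 2 := by
      rw [hcorners, Finset.sum_image (fun a _ b _ h => hinj h)]
      have hstep : ∑ i ∈ range (pLen μ), (pLeg μ (i, pRowLen μ i - 1) + 1)
          = ∑ i ∈ range (pLen μ), (pColLen μ (pRowLen μ i - 1) - i) :=
        Finset.sum_congr rfl (fun i hi => by rw [corner_leg μ i (mem_range.1 hi)])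
      rw [hstep, block_sum μ (fun j => j)]
      exact Finset.sum_congr rfl (fun k _ => sum_Icc_id (pMult μ k))
    rw [← hTval, Finset.sum_filter, hE, ← Finset.sum_add_distrib]
    have hterm : ∀ c ∈ pCells μ, ((if pArm μ c = 0 then pLeg μ c else 2 * pLeg μ c + 1)
        + if pArm μ c = 0 then pLeg μ c + 1 else 0) = 2 * pLeg μ c + 1 := by
      intro c _
      by_cases h : pArm μ c = 0
      · simp only [h, if_pos]
        omega
      · simp [h]
    have hstep2 : ∑ c ∈ pCells μ, ((if pArm μ c = 0 then pLeg μ c else 2 * pLeg μ c + 1)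
        + if pArm μ c = 0 then pLeg μ c + 1 else 0) = ∑ c ∈ pCells μ, (2 * pLeg μ c + 1) :=
      Finset.sum_congr rfl hterm
    rw [hstep2, Finset.sum_add_distrib, Finset.sum_const, smul_eq_mul,
      mul_one, ← Finset.mul_sum, card_pCells μ]
    rfl
  have hcast : ((2 * nStat μ + n : ℤ) - ∑ i ∈ Finset.Icc 1 n, ((pMult μ i + 1).choose 2 : ℤ))
      = (E : ℤ) := by
    have h1 : (∑ i ∈ Finset.Icc 1 n, ((pMult μ i + 1).choose 2 : ℤ))
        = ((∑ i ∈ Finset.Icc 1 n, (pMult μ i + 1).choose 2 : ℕ) : ℤ) := by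
      push_cast
      rfl
    rw [h1]
    omega
  rw [hsgn, hprod, hcast, zpow_natCast]
end
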